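/- If a digraph G contains no directed circuits, then no dominated vertex (a vertex of positive in-degree in G) can be a root in a maximum out forest of G. -/

import Mathlib

/-- The arc relation of a finite arc set. -/
def arcRel {V : Type*} [DecidableEq V] (F : Finset (V × V)) : V → V → Prop :=
  fun a b => (a, b) ∈ F

/-- A diverging forest: no directed cycles, and every vertex has in-degree at most 1. -/
def IsDivForest {V : Type*} [DecidableEq V] (F : Finset (V × V)) : Prop :=
  (∀ v, ¬ Relation.TransGen (arcRel F) v v) ∧
  ∀ w z₁ z₂, (z₁, w) ∈ F → (z₂, w) ∈ F → z₁ = z₂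

/-- A maximum out forest of the digraph with arc set `E`: a spanning diverging forest
with the maximum possible number of arcs. -/
def IsMaxOutForest {V : Type*} [DecidableEq V] (E F : Finset (V × V)) : Prop :=
  F ⊆ E ∧ IsDivForest F ∧
  ∀ F' : Finset (V × V), F' ⊆ E → IsDivForest F' → F'.card ≤ F.card

/-- If `G` has no directed circuits, then no dominated vertex is a root in a maximum
out forest. -/
theorem stmt3 {V : Type*} [DecidableEq V] (E F : Finset (V × V)) (w : V)
    (hacyc : ∀ v, ¬ Relation.TransGen (arcRel E) v v)
    (hdom : ∃ u, (u, w) ∈ E)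
    (hF : IsMaxOutForest E F) :
    ∃ u, (u, w) ∈ F := by
  by_contra h
  push_neg at h
  obtain ⟨u, hu⟩ := hdom
  obtain ⟨hFE, ⟨_, hdeg⟩, hmax⟩ := hF
  set F' : Finset (V × V) := insert (u, w) F with hF'
  have hsub : F' ⊆ E := by
    intro x hx
    rcases Finset.mem_insert.mp hx with rfl | hx
    · exact hu
    · exact hFE hx
  have hdiv : IsDivForest F' := by
    constructor
    · intro v hv
      exact hacyc v (Relation.TransGen.mono (r := arcRel F') (p := arcRel E) (fun a b hab => hsub hab) v v hv)
    · intro w' z₁ z₂ h₁ h₂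
      rcases Finset.mem_insert.mp h₁ with h₁ | h₁ <;>
        rcases Finset.mem_insert.mp h₂ with h₂ | h₂
      · rw [Prod.ext_iff] at h₁ h₂; simp_all
      · exact absurd h₂ (by obtain ⟨rfl, rfl⟩ := Prod.ext_iff.mp h₁; exact h z₂)
      · exact absurd h₁ (by obtain ⟨rfl, rfl⟩ := Prod.ext_iff.mp h₂; exact h z₁)
      · exact hdeg w' z₁ z₂ h₁ h₂
  have hcard : F'.card = F.card + 1 := Finset.card_insert_of_notMem (h u)
  have := hmax F' hsub hdiv
  omega
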